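/- Let A be a k-algebra with a symmetric, associative, non-degenerate bilinear form ⟨·,·⟩_A, and let Σ_w carry the form ⟨σ,τ⟩ = δ_{σ,τ⁻¹}. Then the bilinear form on the wreath product A ≀ Σ_w defined by ⟨x₁ ⊗ ⋯ ⊗ x_w ⊗ σ, y₁ ⊗ ⋯ ⊗ y_w ⊗ τ⟩ = ⟨x₁, y_{σ⁻¹(1)}⟩⋯⟨x_w, y_{σ⁻¹(w)}⟩⟨σ,τ⟩ is symmetric, associative, and non-degenerate; hence A ≀ Σ_w is a symmetric algebra whenever A is. -/

import Mathlib

/-!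
Statement 3: Let `A` be a `k`-algebra with a symmetric, associative, non-degenerate
bilinear form `φ`, and let `Σ_w` carry the form `⟨σ,τ⟩ = δ_{σ,τ⁻¹}`.  Then the bilinear
form on the wreath product `A ≀ Σ_w` defined by
`⟨x₁ ⊗ ⋯ ⊗ x_w ⊗ σ, y₁ ⊗ ⋯ ⊗ y_w ⊗ τ⟩ = ⟨x₁, y_{σ⁻¹ 1}⟩ ⋯ ⟨x_w, y_{σ⁻¹ w}⟩ ⟨σ, τ⟩`
is symmetric, associative and non-degenerate; hence `A ≀ Σ_w` is a symmetric algebra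
whenever `A` is.

The wreath product `A ≀ Σ_w` is modelled as `Σ_w →₀ A^{⊗w}` (i.e. `⊕_{σ} A^{⊗w} ⊗ σ`)
with multiplication
`(x ⊗ σ)·(y ⊗ τ) = (x₁ y_{σ⁻¹ 1} ⊗ ⋯ ⊗ x_w y_{σ⁻¹ w}) ⊗ στ`.
-/

open scoped TensorProduct
open PiTensorProduct

noncomputable section

variable (k : Type*) [Field k] (A : Type*) [Ring A] [Algebra k A] (w : ℕ)

/-- The `w`-fold tensor power `A^{⊗ w}` (a ring, with componentwise product). -/
abbrev TPow := ⨂[k] (_ : Fin w), A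

/-- The wreath product `A ≀ Σ_w = A^{⊗w} ⊗ kΣ_w`, as a `k`-module. -/
abbrev Wreath := Equiv.Perm (Fin w) →₀ TPow k A w

variable {k A w}

/-- The place-permutation action of `σ ∈ Σ_w` on `A^{⊗w}`:
`σ • (y₁ ⊗ ⋯ ⊗ y_w) = y_{σ⁻¹ 1} ⊗ ⋯ ⊗ y_{σ⁻¹ w}`. -/
def permAct (σ : Equiv.Perm (Fin w)) : TPow k A w ≃ₗ[k] TPow k A w :=
  PiTensorProduct.reindex k (fun _ : Fin w => A) σ

/-- The wreath product multiplication: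
`(x ⊗ σ)(y ⊗ τ) = (x₁ y_{σ⁻¹ 1} ⊗ ⋯ ⊗ x_w y_{σ⁻¹ w}) ⊗ στ`. -/
def wmul (f g : Wreath k A w) : Wreath k A w :=
  f.sum fun σ x => g.sum fun τ y => Finsupp.single (σ * τ) (x * permAct σ y)

/-- The product of the pairings `φ` on the tensor power:
`Φ(x₁ ⊗ ⋯ ⊗ x_w, y₁ ⊗ ⋯ ⊗ y_w) = ∏ i, φ (x i) (y i)`. -/
def tpowForm (φ : A →ₗ[k] A →ₗ[k] k) : TPow k A w →ₗ[k] TPow k A w →ₗ[k] k :=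
  LinearMap.comp
    (LinearMap.llcomp k (TPow k A w) (⨂[k] (_ : Fin w), k) k
      (PiTensorProduct.lift (MultilinearMap.mkPiAlgebra k (Fin w) k)))
    (LinearMap.comp PiTensorProduct.piTensorHomMap
      (PiTensorProduct.map fun _ : Fin w => φ))

/-- The bilinear form on the wreath product:
`⟨x ⊗ σ, y ⊗ τ⟩ = (∏ i, φ (x i) (y (σ⁻¹ i))) · δ_{σ, τ⁻¹}`, i.e. the `τ = σ⁻¹`
component of `g` is paired against the `σ` component of `f`. -/
def wform (φ : A →ₗ[k] A →ₗ[k] k) (f g : Wreath k A w) : k :=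
  f.sum fun σ x => tpowForm φ x (permAct σ (g σ⁻¹))

section AuxLemmas

variable (φ : A →ₗ[k] A →ₗ[k] k)

lemma tpowForm_tprod (x y : Fin w → A) :
    tpowForm φ (tprod k x) (tprod k y) = ∏ i, φ (x i) (y i) := by
  simp [tpowForm, PiTensorProduct.map_tprod]

lemma permAct_tprod (σ : Equiv.Perm (Fin w)) (y : Fin w → A) :
    permAct (k := k) σ (tprod k y) = tprod k (fun i => y (σ⁻¹ i)) := by
  simp [permAct, PiTensorProduct.reindex_tprod]

lemma permAct_mul_apply (σ τ : Equiv.Perm (Fin w)) (x : TPow k A w) :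
    permAct (σ * τ) x = permAct σ (permAct τ x) := by
  have : (permAct (k := k) (A := A) (σ * τ)).toLinearMap
      = (permAct σ).toLinearMap ∘ₗ (permAct (k := k) (A := A) τ).toLinearMap := by
    ext y
    simp only [LinearMap.comp_apply, LinearEquiv.coe_coe, LinearMap.compMultilinearMap_apply,
      permAct_tprod, mul_inv_rev, Equiv.Perm.mul_apply]
    exact congrArg _ (funext fun i => by rw [mul_inv_rev]; rfl)
  exact DFunLike.congr_fun this x

lemma permAct_one (x : TPow k A w) : permAct (1 : Equiv.Perm (Fin w)) x = x := by
  have : (1 : Equiv.Perm (Fin w)) = Equiv.refl (Fin w) := rfl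
  simp [permAct, this, PiTensorProduct.reindex_refl]

lemma permAct_smul' (σ : Equiv.Perm (Fin w)) (x y : TPow k A w) :
    permAct (k := k) σ (x * y) = permAct σ x * permAct σ y := by
  have : LinearMap.compr₂ (LinearMap.mul k (TPow k A w)) (permAct (k := k) (A := A) σ).toLinearMap
      = (LinearMap.mul k (TPow k A w)).compl₁₂ (permAct σ).toLinearMap
          (permAct (k := k) (A := A) σ).toLinearMap := by
    ext x y
    simp [permAct_tprod, PiTensorProduct.tprod_mul_tprod, Pi.mul_def]
  exact DFunLike.congr_fun (DFunLike.congr_fun this x) y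

lemma tpowForm_symm (hsymm : ∀ a b : A, φ a b = φ b a) (x y : TPow k A w) :
    tpowForm φ x y = tpowForm φ y x := by
  have : tpowForm (w := w) φ = (tpowForm φ).flip := by
    ext x y
    simp only [LinearMap.compMultilinearMap_apply, LinearMap.flip_apply, tpowForm_tprod]
    exact Finset.prod_congr rfl fun i _ => hsymm _ _
  nth_rewrite 1 [this]
  rfl

lemma tpowForm_perm (σ : Equiv.Perm (Fin w)) (x y : TPow k A w) :
    tpowForm φ (permAct σ x) (permAct σ y) = tpowForm φ x y := by
  have : (tpowForm (w := w) φ).compl₁₂ (permAct (k := k) (A := A) σ).toLinearMap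
      (permAct (k := k) (A := A) σ).toLinearMap = tpowForm φ := by
    ext x y
    simp only [LinearMap.compl₁₂_apply, LinearEquiv.coe_coe,
      LinearMap.compMultilinearMap_apply, permAct_tprod, tpowForm_tprod]
    exact Fintype.prod_equiv σ.symm _ _ fun i => rfl
  exact DFunLike.congr_fun (DFunLike.congr_fun this x) y

lemma tpowForm_mul_assoc (hassoc : ∀ a b c : A, φ (a * b) c = φ a (b * c))
    (x y z : TPow k A w) :
    tpowForm φ (x * y) z = tpowForm φ x (y * z) := by
  have : LinearMap.compr₂ (LinearMap.mul k (TPow k A w)) (tpowForm φ)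
      = { toFun := fun x => LinearMap.compr₂ (LinearMap.mul k (TPow k A w)) (tpowForm φ x),
          map_add' := fun a b => by ext; simp,
          map_smul' := fun c a => by ext; simp } := by
    ext x y z
    simp only [LinearMap.compr₂_apply, LinearMap.mul_apply', LinearMap.coe_mk,
      AddHom.coe_mk, LinearMap.compMultilinearMap_apply, PiTensorProduct.tprod_mul_tprod,
      tpowForm_tprod]
    exact Finset.prod_congr rfl fun i _ => hassoc _ _ _
  exact DFunLike.congr_fun (DFunLike.congr_fun (DFunLike.congr_fun this x) y) z

lemma wform_eq_sum (f g : Wreath k A w) :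
    wform φ f g = ∑ σ : Equiv.Perm (Fin w), tpowForm φ (f σ) (permAct σ (g σ⁻¹)) :=
  Finsupp.sum_fintype _ _ (fun σ => by simp)

lemma wform_sum_left {ι : Type*} (s : Finset ι) (F : ι → Wreath k A w) (g : Wreath k A w) :
    wform φ (∑ i ∈ s, F i) g = ∑ i ∈ s, wform φ (F i) g := by
  simp only [wform_eq_sum, Finsupp.finset_sum_apply, map_sum, LinearMap.coe_sum,
    Finset.sum_apply, LinearMap.sum_apply]
  exact Finset.sum_comm

lemma wform_sum_right {ι : Type*} (s : Finset ι) (F : ι → Wreath k A w) (f : Wreath k A w) :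
    wform φ f (∑ i ∈ s, F i) = ∑ i ∈ s, wform φ f (F i) := by
  simp only [wform_eq_sum, Finsupp.finset_sum_apply, map_sum]
  exact Finset.sum_comm

lemma wform_single_left (π : Equiv.Perm (Fin w)) (v : TPow k A w) (g : Wreath k A w) :
    wform φ (Finsupp.single π v) g = tpowForm φ v (permAct π (g π⁻¹)) := by
  rw [wform, Finsupp.sum_single_index]
  simp

lemma wform_single_right (f : Wreath k A w) (π : Equiv.Perm (Fin w)) (v : TPow k A w) :
    wform φ f (Finsupp.single π v) = tpowForm φ (f π⁻¹) (permAct π⁻¹ v) := by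
  rw [wform_eq_sum, Finset.sum_eq_single π⁻¹]
  · rw [inv_inv, Finsupp.single_eq_same]
  · intro σ _ hσ
    rw [Finsupp.single_eq_of_ne' (fun h => hσ (by rw [h, inv_inv]))]
    simp
  · simp

lemma wmul_eq_sum (f g : Wreath k A w) :
    wmul f g = ∑ σ : Equiv.Perm (Fin w), ∑ τ : Equiv.Perm (Fin w),
      Finsupp.single (σ * τ) (f σ * permAct σ (g τ)) := by
  rw [wmul, Finsupp.sum_fintype]
  · refine Finset.sum_congr rfl fun σ _ => Finsupp.sum_fintype _ _ fun τ => by simp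
  · intro σ
    simp [Finsupp.sum]

lemma wform_symm (hsymm : ∀ a b : A, φ a b = φ b a) (f g : Wreath k A w) :
    wform φ f g = wform φ g f := by
  rw [wform_eq_sum, wform_eq_sum]
  refine Fintype.sum_equiv (Equiv.inv _) _ _ fun σ => ?_
  simp only [Equiv.inv_apply]
  calc tpowForm φ (f σ) (permAct σ (g σ⁻¹))
      = tpowForm φ (permAct σ⁻¹ (f σ)) (permAct σ⁻¹ (permAct σ (g σ⁻¹))) :=
        (tpowForm_perm φ σ⁻¹ _ _).symm
    _ = tpowForm φ (permAct σ⁻¹ (f σ)) (g σ⁻¹) := by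
        rw [← permAct_mul_apply, inv_mul_cancel, permAct_one]
    _ = tpowForm φ (g σ⁻¹) (permAct σ⁻¹ (f σ)) := tpowForm_symm φ hsymm _ _
    _ = tpowForm φ (g σ⁻¹) (permAct σ⁻¹ (f σ⁻¹⁻¹)) := by rw [inv_inv]

lemma wform_assoc (hassoc : ∀ a b c : A, φ (a * b) c = φ a (b * c))
    (f g h : Wreath k A w) :
    wform φ (wmul f g) h = wform φ f (wmul g h) := by
  rw [wmul_eq_sum f g, wmul_eq_sum g h]
  rw [wform_sum_left, wform_sum_right]
  simp only [wform_sum_left, wform_sum_right, wform_single_left, wform_single_right]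
  rw [Finset.sum_comm]
  refine Finset.sum_congr rfl fun τ _ => ?_
  refine Fintype.sum_equiv ⟨fun σ => τ⁻¹ * σ⁻¹, fun ρ => (τ * ρ)⁻¹,
    fun σ => by group, fun ρ => by group⟩ _ _ fun σ => ?_
  simp only [Equiv.coe_fn_mk]
  have h1 : (τ * (τ⁻¹ * σ⁻¹))⁻¹ = σ := by group
  have h2 : (σ * τ)⁻¹ = τ⁻¹ * σ⁻¹ := by rw [mul_inv_rev]
  rw [h1, h2]
  rw [tpowForm_mul_assoc φ hassoc, permAct_smul', ← permAct_mul_apply]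

/-- The linear "cons" map `A →ₗ TPow n →ₗ TPow (n+1)`, `a ↦ z ↦ a ⊗ z`. -/
def consMap {n : ℕ} : A →ₗ[k] TPow k A n →ₗ[k] TPow k A (n + 1) :=
  LinearMap.comp
    (PiTensorProduct.lift :
      MultilinearMap k (fun _ : Fin n => A) (TPow k A (n + 1)) ≃ₗ[k] _).toLinearMap
    (MultilinearMap.curryLeft (tprod k (s := fun _ : Fin (n + 1) => A)))

lemma consMap_tprod {n : ℕ} (a : A) (y : Fin n → A) :
    consMap (k := k) a (PiTensorProduct.tprod k y) = PiTensorProduct.tprod k (Fin.cons a y) := by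
  simp [consMap]

lemma tpowForm_ext_zero {n : ℕ} (L : TPow k A n →ₗ[k] k)
    (h : ∀ y : Fin n → A, L (tprod k y) = 0) : L = 0 := by
  ext y
  simp [h]

lemma exists_repr {n : ℕ} {ι : Type*} (c : Module.Basis ι k (TPow k A n)) (x : TPow k A (n + 1)) :
    ∃ l : ι →₀ A, x = l.sum fun j m => consMap (k := k) m (c j) := by
  classical
  set D : (ι →₀ A) →ₗ[k] TPow k A (n + 1) :=
    Finsupp.lsum k (fun j => (consMap (k := k) (A := A) (n := n)).flip (c j)) with hD
  have hrange : ∀ u : Fin (n + 1) → A, tprod k u ∈ LinearMap.range D := by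
    intro u
    refine ⟨Finsupp.mapRange (· • u 0) (by simp) (c.repr (tprod k (Fin.tail u))), ?_⟩
    rw [hD]
    rw [Finsupp.lsum_apply]
    rw [Finsupp.sum_mapRange_index (by simp)]
    have : ∀ j (r : k), ((consMap (k := k) (A := A) (n := n)).flip (c j)) (r • u 0)
        = r • consMap (k := k) (u 0) (c j) := by
      intro j r; simp
    simp only [this]
    have h4 : consMap (k := k) (u 0) ((c.repr (tprod k (Fin.tail u))).sum fun a b => b • c a)
        = (c.repr (tprod k (Fin.tail u))).sum fun a b => b • consMap (k := k) (u 0) (c a) := by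
      rw [map_finsuppSum]; simp
    rw [← h4, ← Finsupp.linearCombination_apply, Module.Basis.linearCombination_repr, consMap_tprod, Fin.cons_self_tail]
  have htop : LinearMap.range D = ⊤ := by
    rw [← top_le_iff, ← PiTensorProduct.span_tprod_eq_top, Submodule.span_le]
    rintro _ ⟨u, rfl⟩
    exact hrange u
  obtain ⟨l, hl⟩ := LinearMap.range_eq_top.1 htop x
  refine ⟨l, ?_⟩
  rw [← hl, hD, Finsupp.lsum_apply]
  rfl

lemma tpowForm_cons {n : ℕ} (m a : A) (z : TPow k A n) (y : Fin n → A) :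
    tpowForm φ (consMap (k := k) m z) (tprod k (Fin.cons a y))
      = φ m a * tpowForm φ z (tprod k y) := by
  have : ((tpowForm φ).flip (tprod k (Fin.cons a y))) ∘ₗ consMap (k := k) m
      = φ m a • (tpowForm φ).flip (tprod k y) := by
    ext y'
    simp only [LinearMap.comp_apply, LinearMap.compMultilinearMap_apply, consMap_tprod,
      LinearMap.flip_apply, LinearMap.smul_apply, tpowForm_tprod, smul_eq_mul]
    rw [Fin.prod_univ_succ]
    simp
  exact DFunLike.congr_fun this z

lemma tpow_nondeg (hnd : ∀ a : A, (∀ b : A, φ a b = 0) → a = 0) (n : ℕ) :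
    ∀ x : TPow k A n, (∀ z : TPow k A n, tpowForm φ x z = 0) → x = 0 := by
  induction n with
  | zero =>
    intro x hx
    set e : TPow k A 0 ≃ₗ[k] k := isEmptyEquiv (Fin 0) with he
    have h0 : e x = 0 := by
      have := hx (tprod k (fun i => (Fin.elim0 i : A)))
      have h2 : ∀ r : k, tpowForm φ (e.symm r)
          (tprod k (fun i => (Fin.elim0 i : A))) = r := by
        intro r
        show tpowForm φ (r • PiTensorProduct.tprod k _) _ = r
        simp [tpowForm_tprod]
      have h3 := h2 (e x)
      rw [LinearEquiv.symm_apply_apply] at h3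
      rw [← h3, this]
    have := congrArg e.symm h0
    rwa [LinearEquiv.symm_apply_apply, map_zero] at this
  | succ n ih =>
    intro x hx
    classical
    obtain ⟨l, rfl⟩ := exists_repr (Module.Basis.ofVectorSpace k (TPow k A n)) x
    set c := Module.Basis.ofVectorSpace k (TPow k A n) with hc
    suffices hl : l = 0 by rw [hl, Finsupp.sum_zero_index]
    have hLI : LinearIndependent k (fun j => tpowForm φ (c j)) := by
      refine c.linearIndependent.map' (tpowForm φ) (LinearMap.ker_eq_bot'.2 fun z hz => ?_)
      exact ih z fun z' => by rw [hz]; rfl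
    have key : ∀ (a : A) (j), j ∈ l.support → φ (l j) a = 0 := by
      intro a
      have h3 : ∑ j ∈ l.support, (φ (l j) a) • tpowForm φ (c j) = 0 := by
        apply tpowForm_ext_zero
        intro y
        have := hx (tprod k (Fin.cons a y))
        rw [map_finsuppSum] at this
        simp only [Finsupp.sum, LinearMap.coe_sum, Finset.sum_apply, tpowForm_cons] at this
        simpa [LinearMap.sum_apply, LinearMap.smul_apply, smul_eq_mul] using this
      exact fun j hj => linearIndependent_iff'.1 hLI l.support _ h3 j hj
    ext j
    by_cases hj : j ∈ l.support
    · exact hnd (l j) (fun a => key a j hj)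
    · simpa using Finsupp.notMem_support_iff.1 hj

lemma wform_nondeg (hnd : ∀ a : A, (∀ b : A, φ a b = 0) → a = 0)
    (f : Wreath k A w) (h : ∀ g : Wreath k A w, wform φ f g = 0) : f = 0 := by
  ext π
  refine tpow_nondeg φ hnd w (f π) fun z => ?_
  have := h (Finsupp.single π⁻¹ ((permAct (k := k) π).symm z))
  rw [wform_single_right, inv_inv] at this
  rwa [LinearEquiv.apply_symm_apply] at this

end AuxLemmas

/-- If `φ` is a symmetric, associative, non-degenerate bilinear form
on `A`, then the induced bilinear form on the wreath product `A ≀ Σ_w` is symmetric,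
associative and non-degenerate; hence `A ≀ Σ_w` is a symmetric algebra whenever `A` is. -/
theorem wreath_symmetricAlgebra
    (φ : A →ₗ[k] A →ₗ[k] k)
    (hsymm : ∀ a b : A, φ a b = φ b a)
    (hassoc : ∀ a b c : A, φ (a * b) c = φ a (b * c))
    (hnd : ∀ a : A, (∀ b : A, φ a b = 0) → a = 0) :
    (∀ f g : Wreath k A w, wform φ f g = wform φ g f)
    ∧ (∀ f g h : Wreath k A w, wform φ (wmul f g) h = wform φ f (wmul g h))
    ∧ (∀ f : Wreath k A w, (∀ g : Wreath k A w, wform φ f g = 0) → f = 0) := by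
  exact ⟨wform_symm φ hsymm, wform_assoc φ hassoc, wform_nondeg φ hnd⟩

end
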